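/- For every percolation function f (the indicator of the event {A ↔ B} that two vertex sets A and B are connected by open edges in a finite multigraph G = (V,E) with |E| = n, as a function of the edge configuration ω ∈ {0,1}^E), the pointwise witness complexity equals the pointwise block sensitivity: w_f(ω) = b_f(ω) for every ω ∈ {0,1}^n. In particular, w(f,π_p) = b(f,π_p) for every p ∈ [0,1]. -/

import Mathlib

open Classical

noncomputable section

/-- Flip the bits of `x` in the set `B`. -/
def flipOn {ι : Type*} [DecidableEq ι] (x : ι → Bool) (B : Finset ι) : ι → Bool :=
  fun i => if i ∈ B then !(x i) else x i

/-- Pointwise sensitivity of `f` at `x`. -/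
def sensAt {ι : Type*} [Fintype ι] [DecidableEq ι] (f : (ι → Bool) → Bool)
    (x : ι → Bool) : ℕ :=
  (Finset.univ.filter fun i => f (flipOn x {i}) ≠ f x).card

/-- Pointwise block sensitivity of `f` at `x`. -/
def bsAt {ι : Type*} [DecidableEq ι] (f : (ι → Bool) → Bool) (x : ι → Bool) : ℕ :=
  sSup {m | ∃ B : Fin m → Finset ι,
    (∀ j, f (flipOn x (B j)) ≠ f x) ∧ ∀ j k, j ≠ k → Disjoint (B j) (B k)}

/-- `W` is a witness set for `f` at `x`. -/
def IsWitness {ι : Type*} (f : (ι → Bool) → Bool) (x : ι → Bool) (W : Finset ι) : Prop :=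
  ∀ y, (∀ i ∈ W, y i = x i) → f y = f x

/-- Pointwise minimum witness size of `f` at `x`. -/
def witAt {ι : Type*} (f : (ι → Bool) → Bool) (x : ι → Bool) : ℕ :=
  sInf {k | ∃ W : Finset ι, W.card = k ∧ IsWitness f x W}

/-- Decision trees querying coordinates in `ι`. -/
inductive DTree (ι : Type*) where
  | leaf : DTree ι
  | node : ι → DTree ι → DTree ι → DTree ι

/-- The set of coordinates queried by the tree `T` on input `x`. -/
def DTree.path {ι : Type*} [DecidableEq ι] : DTree ι → (ι → Bool) → Finset ι
  | .leaf, _ => ∅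
  | .node i t0 t1, x => insert i (if x i then t1.path x else t0.path x)

/-- The tree `T` determines `f`: at each leaf the queried bits witness the value of `f`. -/
def DTree.Determines {ι : Type*} [DecidableEq ι] (T : DTree ι)
    (f : (ι → Bool) → Bool) : Prop :=
  ∀ x, IsWitness f x (T.path x)

/-- A partition of the hypercube into subcubes, encoded by the map sending each point to
the code (fixed coordinates) of its part. -/
structure SubcubePartition (ι : Type*) where
  code : (ι → Bool) → (ι → Option Bool)
  self_mem : ∀ x i b, code x i = some b → x i = b
  compat : ∀ x y, (∀ i b, code x i = some b → y i = b) → code y = code x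

/-- Number of coordinates fixed by the subcube containing `x`. -/
def SubcubePartition.codim {ι : Type*} [Fintype ι] (P : SubcubePartition ι)
    (x : ι → Bool) : ℕ :=
  (Finset.univ.filter fun i => (P.code x i).isSome).card

/-- The partition determines `f`, i.e. `f` is constant on each part. -/
def SubcubePartition.Determines {ι : Type*} (P : SubcubePartition ι)
    (f : (ι → Bool) → Bool) : Prop :=
  ∀ x y, (∀ i b, P.code x i = some b → y i = b) → f y = f x

/-- Deterministic sensitivity. -/
def detSens {ι : Type*} [Fintype ι] [DecidableEq ι] (f : (ι → Bool) → Bool) : ℕ :=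
  Finset.univ.sup fun x => sensAt f x

/-- Deterministic block sensitivity. -/
def detBS {ι : Type*} [Fintype ι] [DecidableEq ι] (f : (ι → Bool) → Bool) : ℕ :=
  Finset.univ.sup fun x => bsAt f x

/-- Deterministic witness complexity. -/
def detWit {ι : Type*} [Fintype ι] [DecidableEq ι] (f : (ι → Bool) → Bool) : ℕ :=
  Finset.univ.sup fun x => witAt f x

/-- Deterministic subcube partition complexity. -/
def detSC {ι : Type*} [Fintype ι] (f : (ι → Bool) → Bool) : ℕ :=
  sInf {k | ∃ P : SubcubePartition ι, P.Determines f ∧ ∀ x, P.codim x ≤ k}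

/-- Deterministic algorithmic (decision tree) complexity. -/
def detAlg {ι : Type*} [Fintype ι] [DecidableEq ι] (f : (ι → Bool) → Bool) : ℕ :=
  sInf {k | ∃ T : DTree ι, T.Determines f ∧ ∀ x, (T.path x).card ≤ k}

/-- Weight of the configuration `x` under the product Bernoulli(p) measure `π_p`. -/
def wt {ι : Type*} [Fintype ι] (p : ℝ) (x : ι → Bool) : ℝ :=
  ∏ i, (if x i then p else 1 - p)

/-- Expectation under `π_p`. -/
def expec {ι : Type*} [Fintype ι] [DecidableEq ι] (p : ℝ) (g : (ι → Bool) → ℝ) : ℝ :=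
  ∑ x, wt p x * g x

/-- Distributional sensitivity. -/
def distSens {ι : Type*} [Fintype ι] [DecidableEq ι] (f : (ι → Bool) → Bool) (p : ℝ) : ℝ :=
  expec p fun x => (sensAt f x : ℝ)

/-- Distributional block sensitivity. -/
def distBS {ι : Type*} [Fintype ι] [DecidableEq ι] (f : (ι → Bool) → Bool) (p : ℝ) : ℝ :=
  expec p fun x => (bsAt f x : ℝ)

/-- Distributional witness complexity. -/
def distWit {ι : Type*} [Fintype ι] [DecidableEq ι] (f : (ι → Bool) → Bool) (p : ℝ) : ℝ :=
  expec p fun x => (witAt f x : ℝ)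

/-- Distributional subcube partition complexity. -/
def distSC {ι : Type*} [Fintype ι] [DecidableEq ι] (f : (ι → Bool) → Bool) (p : ℝ) : ℝ :=
  sInf {c | ∃ P : SubcubePartition ι, P.Determines f ∧
    c = expec p fun x => (P.codim x : ℝ)}

/-- Distributional algorithmic complexity. -/
def distAlg {ι : Type*} [Fintype ι] [DecidableEq ι] (f : (ι → Bool) → Bool) (p : ℝ) : ℝ :=
  sInf {c | ∃ T : DTree ι, T.Determines f ∧
    c = expec p fun x => ((T.path x).card : ℝ)}

/-- `μ x J` is the joint probability that the bits equal `x` and the random set equals `J`;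
the conditions say: the marginal of the bits is `π_p`, the random set is a.s. a witness set
for `f`, and the random set is local (conditionally on `{I = J}` and the bits on `J`, the
bits outside `J` are still i.i.d. Bernoulli(p)). -/
def IsLocalWitnessSystem {ι : Type*} [Fintype ι] [DecidableEq ι]
    (f : (ι → Bool) → Bool) (p : ℝ) (μ : (ι → Bool) → Finset ι → ℝ) : Prop :=
  (∀ x J, 0 ≤ μ x J) ∧
  (∀ x, ∑ J, μ x J = wt p x) ∧
  (∀ x J, μ x J ≠ 0 → IsWitness f x J) ∧
  (∀ (J : Finset ι) x y, (∀ i ∈ J, x i = y i) → μ x J * wt p y = μ y J * wt p x)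

/-- Distributional local witness complexity. -/
def distLocal {ι : Type*} [Fintype ι] [DecidableEq ι]
    (f : (ι → Bool) → Bool) (p : ℝ) : ℝ :=
  sInf {c | ∃ μ : (ι → Bool) → Finset ι → ℝ, IsLocalWitnessSystem f p μ ∧
    c = ∑ x, ∑ J, μ x J * (J.card : ℝ)}

namespace PercAux

variable {V : Type*} {n : ℕ}

def estep (ends : Fin n → V × V) (e : Fin n) (u v : V) : Prop :=
  ends e = (u, v) ∨ ends e = (v, u)

def stp (ends : Fin n → V × V) (S : Finset (Fin n)) (u v : V) : Prop :=
  ∃ e ∈ S, estep ends e u v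

def conn (ends : Fin n → V × V) (A B : Set V) (S : Finset (Fin n)) : Prop :=
  ∃ a ∈ A, ∃ b ∈ B, Relation.ReflTransGen (stp ends S) a b

def dstep (ends : Fin n → V × V) (e : Fin n) (d : Bool) (u v : V) : Prop :=
  if d then ends e = (u, v) else ends e = (v, u)

inductive Walk (ends : Fin n → V × V) (Al : Fin n → Bool → Prop) :
    List (Fin n × Bool) → V → V → Prop
  | nil (u : V) : Walk ends Al [] u u
  | cons {e d u x v l} : Al e d → dstep ends e d u x → Walk ends Al l x v →
      Walk ends Al ((e, d) :: l) u v

variable {ends : Fin n → V × V} {Al : Fin n → Bool → Prop}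

lemma conn_mono {A B : Set V} {S T : Finset (Fin n)} (hST : S ⊆ T)
    (h : conn ends A B S) : conn ends A B T := by
  obtain ⟨a, ha, b, hb, hr⟩ := h
  exact ⟨a, ha, b, hb, Relation.ReflTransGen.mono
    (fun u v ⟨e, he, hs⟩ => ⟨e, hST he, hs⟩) _ _ hr⟩

lemma dstep_estep {e : Fin n} {d : Bool} {u v : V} (h : dstep ends e d u v) :
    estep ends e u v := by
  cases d <;> simp [dstep] at h <;> [exact Or.inr h; exact Or.inl h]

lemma estep_dstep {e : Fin n} {u v : V} (h : estep ends e u v) :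
    ∃ d, dstep ends e d u v := by
  rcases h with h | h
  · exact ⟨true, by simpa [dstep] using h⟩
  · exact ⟨false, by simpa [dstep] using h⟩

lemma walk_append {l₁ l₂ : List (Fin n × Bool)} {u x v : V}
    (h₁ : Walk ends Al l₁ u x) (h₂ : Walk ends Al l₂ x v) :
    Walk ends Al (l₁ ++ l₂) u v := by
  induction h₁ with
  | nil => simpa using h₂
  | cons hal hd _ ih => exact Walk.cons hal hd (ih h₂)

lemma walk_snoc {l : List (Fin n × Bool)} {u x y : V} {e : Fin n} {d : Bool}
    (h : Walk ends Al l u x) (hal : Al e d) (hd : dstep ends e d x y) :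
    Walk ends Al (l ++ [(e, d)]) u y :=
  walk_append h (Walk.cons hal hd (Walk.nil y))

lemma walk_allowed {l : List (Fin n × Bool)} {u v : V} (h : Walk ends Al l u v) :
    ∀ s ∈ l, Al s.1 s.2 := by
  induction h with
  | nil => intro s hs; simp at hs
  | cons hal _ _ ih =>
    intro s hs
    rcases List.mem_cons.1 hs with h | h
    · subst h; exact hal
    · exact ih s h

lemma walk_rtg {l : List (Fin n × Bool)} {u v : V} (S : Finset (Fin n))
    (h : Walk ends Al l u v) (hS : ∀ s ∈ l, s.1 ∈ S) :
    Relation.ReflTransGen (stp ends S) u v := by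
  induction h with
  | nil => exact Relation.ReflTransGen.refl
  | cons hal hd _ ih =>
    refine Relation.ReflTransGen.head ⟨_, hS _ List.mem_cons_self, dstep_estep hd⟩ ?_
    exact ih fun s hs => hS s (List.mem_cons_of_mem _ hs)

lemma rtg_walk {S : Finset (Fin n)} {u v : V}
    (h : Relation.ReflTransGen (stp ends S) u v) :
    ∃ l, Walk ends (fun e _ => e ∈ S) l u v := by
  induction h with
  | refl => exact ⟨[], Walk.nil u⟩
  | tail _ hstep ih =>
    obtain ⟨l, hl⟩ := ih
    obtain ⟨e, he, hes⟩ := hstep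
    obtain ⟨d, hd⟩ := estep_dstep hes
    exact ⟨l ++ [(e, d)], walk_snoc hl he hd⟩

lemma walk_splitAt {l₁ l₂ : List (Fin n × Bool)} {e : Fin n} {d : Bool} {v : V} :
    ∀ {u : V}, Walk ends Al (l₁ ++ (e, d) :: l₂) u v →
    ∃ x y, Walk ends Al l₁ u x ∧ Al e d ∧ dstep ends e d x y ∧ Walk ends Al l₂ y v := by
  induction l₁ with
  | nil =>
    intro u h
    cases h with
    | cons hal hd hrest => exact ⟨u, _, Walk.nil u, hal, hd, hrest⟩
  | cons s t ih =>
    intro u h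
    cases h with
    | cons hal hd hrest =>
      obtain ⟨x, y, hw, h1, h2, h3⟩ := ih hrest
      exact ⟨x, y, Walk.cons hal hd hw, h1, h2, h3⟩

lemma walk_dedup {l : List (Fin n × Bool)} {u v : V} (h : Walk ends Al l u v) :
    ∃ l', Walk ends Al l' u v ∧ (l'.map Prod.fst).Nodup ∧ ∀ s ∈ l', s ∈ l := by
  induction h with
  | nil => exact ⟨[], Walk.nil _, List.nodup_nil, fun s hs => by simp at hs⟩
  | @cons e d u x v t hal hd _ ih =>
    obtain ⟨t', hw', hnd', hsub'⟩ := ih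
    by_cases he : e ∈ t'.map Prod.fst
    · obtain ⟨⟨e₁, d'⟩, hmem, hfst⟩ := List.mem_map.1 he
      have he₁ : e₁ = e := hfst
      subst he₁
      obtain ⟨m₁, m₂, hsplit⟩ := List.append_of_mem hmem
      subst hsplit
      obtain ⟨p, q, hwp, hal', hd', hwq⟩ := walk_splitAt hw'
      have hnd₂ : ((m₂.map Prod.fst).Nodup) ∧ e₁ ∉ m₂.map Prod.fst := by
        rw [List.map_append] at hnd'
        simp only [List.map_cons] at hnd'
        have h2 := (List.nodup_append.1 hnd').2.1
        exact ⟨(List.nodup_cons.1 h2).2, (List.nodup_cons.1 h2).1⟩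
      have hmemsub : ∀ s ∈ m₂, s ∈ (e₁, d) :: t := fun s hs =>
        List.mem_cons_of_mem _ (hsub' s (by simp [hs]))
      rcases Bool.eq_false_or_eq_true d with hdv | hdv <;>
        rcases Bool.eq_false_or_eq_true d' with hdv' | hdv' <;> subst hdv <;> subst hdv'
      · -- d = true, d' = true : same direction
        simp [dstep] at hd hd'
        rw [hd] at hd'
        have hx : x = q := congrArg Prod.snd hd'
        refine ⟨(e₁, true) :: m₂, Walk.cons hal (by simp [dstep, hd, hx]) hwq, ?_, ?_⟩
        · rw [List.map_cons, List.nodup_cons]; exact ⟨hnd₂.2, hnd₂.1⟩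
        · intro s hs
          rcases List.mem_cons.1 hs with h | h
          · simp [h]
          · exact hmemsub s h
      · -- d = true, d' = false : opposite
        simp [dstep] at hd hd'
        rw [hd] at hd'
        have hq : u = q := congrArg Prod.fst hd'
        subst hq
        exact ⟨m₂, hwq, hnd₂.1, hmemsub⟩
      · -- d = false, d' = true : opposite
        simp [dstep] at hd hd'
        rw [hd] at hd'
        have hq : u = q := congrArg Prod.snd hd'
        subst hq
        exact ⟨m₂, hwq, hnd₂.1, hmemsub⟩
      · -- d = false, d' = false : same direction
        simp [dstep] at hd hd'
        rw [hd] at hd'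
        have hx : x = q := congrArg Prod.fst hd'
        refine ⟨(e₁, false) :: m₂, Walk.cons hal (by simp [dstep, hd, hx]) hwq, ?_, ?_⟩
        · rw [List.map_cons, List.nodup_cons]; exact ⟨hnd₂.2, hnd₂.1⟩
        · intro s hs
          rcases List.mem_cons.1 hs with h | h
          · simp [h]
          · exact hmemsub s h
    · refine ⟨(e, d) :: t', Walk.cons hal hd hw', ?_, ?_⟩
      · rw [List.map_cons, List.nodup_cons]; exact ⟨he, hnd'⟩
      · intro s hs
        rcases List.mem_cons.1 hs with h | h
        · simp [h]
        · exact List.mem_cons_of_mem _ (hsub' s h)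

section flows

variable (ends : Fin n → V × V) (A B : Set V) (O G : Finset (Fin n))

def exc (f : Fin n → ℤ) (v : V) : ℤ :=
  ∑ e : Fin n, ((if (ends e).2 = v then f e else 0) - (if (ends e).1 = v then f e else 0))

def psum (f : Fin n → ℤ) (P : V → Prop) : ℤ :=
  ∑ e : Fin n, f e * ((if P (ends e).2 then 1 else 0) - (if P (ends e).1 then 1 else 0))

def VR : Finset V :=
  Finset.univ.image (fun e => (ends e).1) ∪ Finset.univ.image (fun e => (ends e).2)

lemma psum_eq_sum_exc (f : Fin n → ℤ) (P : V → Prop) :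
    psum ends f P = ∑ v ∈ (VR ends).filter P, exc ends f v := by
  unfold psum exc
  rw [Finset.sum_comm]
  refine Finset.sum_congr rfl fun e _ => ?_
  rw [Finset.sum_sub_distrib]
  have h1 : (ends e).1 ∈ VR ends :=
    Finset.mem_union_left _ (Finset.mem_image.2 ⟨e, Finset.mem_univ e, rfl⟩)
  have h2 : (ends e).2 ∈ VR ends :=
    Finset.mem_union_right _ (Finset.mem_image.2 ⟨e, Finset.mem_univ e, rfl⟩)
  rw [Finset.sum_ite_eq ((VR ends).filter P) (ends e).2 (fun _ => f e),
    Finset.sum_ite_eq ((VR ends).filter P) (ends e).1 (fun _ => f e)]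
  by_cases hP1 : P (ends e).1 <;> by_cases hP2 : P (ends e).2 <;>
    simp [Finset.mem_filter, h1, h2, hP1, hP2] <;> ring

lemma psum_zero_of_exc (f : Fin n → ℤ) (P : V → Prop)
    (h : ∀ v, P v → exc ends f v = 0) : psum ends f P = 0 := by
  rw [psum_eq_sum_exc]
  exact Finset.sum_eq_zero fun v hv => h v (Finset.mem_filter.1 hv).2

lemma psum_add (f g : Fin n → ℤ) (P : V → Prop) :
    psum ends (fun e => f e + g e) P = psum ends f P + psum ends g P := by
  unfold psum; rw [← Finset.sum_add_distrib]; exact Finset.sum_congr rfl fun e _ => by ring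

lemma psum_sub (f g : Fin n → ℤ) (P : V → Prop) :
    psum ends (fun e => f e - g e) P = psum ends f P - psum ends g P := by
  unfold psum; rw [← Finset.sum_sub_distrib]; exact Finset.sum_congr rfl fun e _ => by ring

lemma exc_add (f g : Fin n → ℤ) (w : V) :
    exc ends (fun e => f e + g e) w = exc ends f w + exc ends g w := by
  unfold exc; rw [← Finset.sum_add_distrib]
  refine Finset.sum_congr rfl fun e _ => ?_
  by_cases h1 : (ends e).2 = w <;> by_cases h2 : (ends e).1 = w <;> simp [h1, h2] <;> ring

lemma exc_sub (f g : Fin n → ℤ) (w : V) :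
    exc ends (fun e => f e - g e) w = exc ends f w - exc ends g w := by
  unfold exc; rw [← Finset.sum_sub_distrib]
  refine Finset.sum_congr rfl fun e _ => ?_
  by_cases h1 : (ends e).2 = w <;> by_cases h2 : (ends e).1 = w <;> simp [h1, h2] <;> ring

lemma psum_single (e₀ : Fin n) (c : ℤ) (P : V → Prop) :
    psum ends (fun e => if e = e₀ then c else 0) P =
      c * ((if P (ends e₀).2 then 1 else 0) - (if P (ends e₀).1 then 1 else 0)) := by
  unfold psum
  rw [Finset.sum_eq_single e₀]
  · simp
  · intro b _ hb; simp [hb]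
  · intro h; exact absurd (Finset.mem_univ e₀) h

lemma exc_single (e₀ : Fin n) (c : ℤ) (w : V) :
    exc ends (fun e => if e = e₀ then c else 0) w =
      (if (ends e₀).2 = w then c else 0) - (if (ends e₀).1 = w then c else 0) := by
  unfold exc
  rw [Finset.sum_eq_single e₀]
  · simp
  · intro b _ hb; simp [hb]
  · intro h; exact absurd (Finset.mem_univ e₀) h

def deltaL (l : List (Fin n × Bool)) (e : Fin n) : ℤ :=
  (if (e, true) ∈ l then 1 else 0) - (if (e, false) ∈ l then 1 else 0)

lemma deltaL_cons (e : Fin n) (d : Bool) (t : List (Fin n × Bool))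
    (he : e ∉ t.map Prod.fst) :
    deltaL ((e, d) :: t) = fun e' =>
      (if e' = e then (if d then 1 else -1) else 0) + deltaL t e' := by
  funext e'
  by_cases h : e' = e
  · subst h
    have h1 : (e', true) ∉ t := fun hm => he (List.mem_map.2 ⟨_, hm, rfl⟩)
    have h2 : (e', false) ∉ t := fun hm => he (List.mem_map.2 ⟨_, hm, rfl⟩)
    cases d <;> simp [deltaL, List.mem_cons, h1, h2]
  · have h1 : ((e', true) ∈ (e, d) :: t) ↔ (e', true) ∈ t := by
      simp [List.mem_cons, Prod.ext_iff, h]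
    have h2 : ((e', false) ∈ (e, d) :: t) ↔ (e', false) ∈ t := by
      simp [List.mem_cons, Prod.ext_iff, h]
    simp [deltaL, h1, h2, h]

variable {ends}

lemma walk_deltaL_psum {Al : Fin n → Bool → Prop} {l : List (Fin n × Bool)} {u v : V}
    (hw : Walk ends Al l u v) (hnd : (l.map Prod.fst).Nodup) (P : V → Prop) :
    psum ends (deltaL l) P = (if P v then 1 else 0) - (if P u then 1 else 0) := by
  induction hw with
  | nil => simp [psum, deltaL]
  | @cons e d u x v t hal hd _ ih =>
    rw [List.map_cons, List.nodup_cons] at hnd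
    rw [deltaL_cons e d t hnd.1, psum_add, psum_single, ih hnd.2]
    rcases Bool.eq_false_or_eq_true d with hdv | hdv <;> subst hdv <;>
      simp [dstep] at hd <;> rw [hd] <;> simp <;> ring

lemma walk_deltaL_exc {Al : Fin n → Bool → Prop} {l : List (Fin n × Bool)} {u v : V}
    (hw : Walk ends Al l u v) (hnd : (l.map Prod.fst).Nodup) (w : V) :
    exc ends (deltaL l) w = (if v = w then 1 else 0) - (if u = w then 1 else 0) := by
  induction hw with
  | nil => simp [exc, deltaL]
  | @cons e d u x v t hal hd _ ih =>
    rw [List.map_cons, List.nodup_cons] at hnd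
    rw [deltaL_cons e d t hnd.1, exc_add, exc_single, ih hnd.2]
    rcases Bool.eq_false_or_eq_true d with hdv | hdv <;> subst hdv <;>
      simp [dstep] at hd <;> rw [hd] <;>
      by_cases h1 : x = w <;> by_cases h2 : u = w <;> simp [h1, h2] <;> ring

variable (ends)

def IsFlow (f : Fin n → ℤ) : Prop :=
  (∀ e, e ∉ O → e ∈ G → -1 ≤ f e ∧ f e ≤ 1) ∧
  (∀ e, e ∉ O → e ∉ G → f e = 0) ∧
  (∀ v, v ∉ A → v ∉ B → exc ends f v = 0)

def AllowedR (f : Fin n → ℤ) (e : Fin n) (d : Bool) : Prop :=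
  e ∈ O ∨ (e ∈ G ∧ (if d then f e < 1 else -1 < f e))

def AllowedD (f : Fin n → ℤ) (e : Fin n) (d : Bool) : Prop :=
  e ∈ O ∨ (e ∈ G ∧ (if d then 0 < f e else f e < 0))

variable {ends A B O G}

lemma psum_compl (f : Fin n → ℤ)
    (hcons : ∀ v, v ∉ A → v ∉ B → exc ends f v = 0) (Z : V → Prop)
    (hA : ∀ v ∈ A, Z v) (hB : ∀ v ∈ B, ¬ Z v) :
    psum ends f (fun v => ¬ Z v) = psum ends f (· ∈ B) := by
  have key : psum ends f (fun v => ¬ Z v) - psum ends f (· ∈ B)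
      = psum ends f (fun v => ¬ Z v ∧ v ∉ B) := by
    unfold psum
    rw [← Finset.sum_sub_distrib]
    refine Finset.sum_congr rfl fun e _ => ?_
    by_cases hz1 : Z (ends e).1 <;> by_cases hz2 : Z (ends e).2 <;>
      by_cases hb1 : (ends e).1 ∈ B <;> by_cases hb2 : (ends e).2 ∈ B <;>
      first
        | exact absurd hz1 (hB _ hb1)
        | exact absurd hz2 (hB _ hb2)
        | (simp [hz1, hz2, hb1, hb2]; try ring)
  have h0 : psum ends f (fun v => ¬ Z v ∧ v ∉ B) = 0 :=
    psum_zero_of_exc ends f _ (fun v hv => hcons v (fun hvA => hv.1 (hA v hvA)) hv.2)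
  omega

end flows

section main

variable {ends : Fin n → V × V} {A B : Set V} {O G : Finset (Fin n)}

lemma augment (hAB : ∀ v ∈ A, v ∉ B) (k : ℕ)
    (hcut : ∀ C : Finset (Fin n), C ⊆ G → C.card < k → conn ends A B (O ∪ (G \ C)))
    (f : Fin n → ℤ) (hf : IsFlow ends A B O G f) (m : ℕ)
    (hm : psum ends f (· ∈ B) = m) (hmk : m < k) :
    ∃ f', IsFlow ends A B O G f' ∧ psum ends f' (· ∈ B) = (m : ℤ) + 1 := by
  obtain ⟨hcap, hsupp, hcons⟩ := hf
  by_cases hreach : ∃ a ∈ A, ∃ b ∈ B, ∃ l, Walk ends (AllowedR O G f) l a b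
  · obtain ⟨a, ha, b, hb, l₀, hw₀⟩ := hreach
    obtain ⟨l, hw, hnd, -⟩ := walk_dedup hw₀
    have hallow := walk_allowed hw
    refine ⟨fun e => f e + deltaL l e, ⟨?_, ?_, ?_⟩, ?_⟩
    · intro e heO heG
      have hc := hcap e heO heG
      by_cases ht : (e, true) ∈ l <;> by_cases hfa : (e, false) ∈ l
      · exact absurd (List.inj_on_of_nodup_map hnd ht hfa rfl) (by simp)
      · have hlt : f e < 1 := by
          rcases hallow (e, true) ht with h | h
          · exact absurd h heO
          · simpa using h.2
        have hδ : deltaL l e = 1 := by simp [deltaL, ht, hfa]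
        simp only [hδ]; omega
      · have hgt : -1 < f e := by
          rcases hallow (e, false) hfa with h | h
          · exact absurd h heO
          · simpa using h.2
        have hδ : deltaL l e = -1 := by simp [deltaL, ht, hfa]
        simp only [hδ]; omega
      · have hδ : deltaL l e = 0 := by simp [deltaL, ht, hfa]
        simp only [hδ]; omega
    · intro e heO heG
      have h1 : (e, true) ∉ l := fun h => by
        rcases hallow (e, true) h with h' | h'
        · exact heO h'
        · exact heG h'.1
      have h2 : (e, false) ∉ l := fun h => by
        rcases hallow (e, false) h with h' | h'
        · exact heO h'
        · exact heG h'.1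
      simp [deltaL, h1, h2, hsupp e heO heG]
    · intro w hwA hwB
      rw [exc_add, hcons w hwA hwB, walk_deltaL_exc hw hnd w]
      have hba : ¬ (a = w) := fun h => hwA (h ▸ ha)
      have hbb : ¬ (b = w) := fun h => hwB (h ▸ hb)
      simp [hba, hbb]
    · rw [psum_add, hm, walk_deltaL_psum hw hnd (· ∈ B)]
      rw [if_pos hb, if_neg (hAB a ha)]
      ring
  · exfalso
    set Z : V → Prop := fun v => ∃ a ∈ A, ∃ l, Walk ends (AllowedR O G f) l a v with hZ
    have hZA : ∀ a ∈ A, Z a := fun a ha => ⟨a, ha, [], Walk.nil a⟩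
    have hZstep : ∀ {u e d y}, Z u → AllowedR O G f e d → dstep ends e d u y → Z y := by
      rintro u e d y ⟨a, ha, l, hl⟩ hal hd
      exact ⟨a, ha, l ++ [(e, d)], walk_snoc hl hal hd⟩
    have hZB : ∀ b ∈ B, ¬ Z b := fun b hb hzb => by
      obtain ⟨a, ha, l, hl⟩ := hzb
      exact hreach ⟨a, ha, b, hb, l, hl⟩
    have hd1 : ∀ e : Fin n, dstep ends e true (ends e).1 (ends e).2 := fun e => by
      simp [dstep]
    have hd2 : ∀ e : Fin n, dstep ends e false (ends e).2 (ends e).1 := fun e => by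
      simp [dstep]
    have hOZ : ∀ e ∈ O, (Z (ends e).1 ↔ Z (ends e).2) := fun e he =>
      ⟨fun h => hZstep h (Or.inl he) (hd1 e), fun h => hZstep h (Or.inl he) (hd2 e)⟩
    set Cst : Finset (Fin n) := (G \ O).filter
      (fun e => (Z (ends e).1 ∧ ¬ Z (ends e).2) ∨ (Z (ends e).2 ∧ ¬ Z (ends e).1)) with hCdef
    have hCsub : Cst ⊆ G := (Finset.filter_subset _ _).trans Finset.sdiff_subset
    have hncut : ¬ conn ends A B (O ∪ (G \ Cst)) := by
      rintro ⟨a, ha, b, hb, hr⟩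
      refine hZB b hb ?_
      clear hb
      induction hr with
      | refl => exact hZA a ha
      | tail _ hstep ih =>
        obtain ⟨e, he, hes⟩ := hstep
        by_cases heO : e ∈ O
        · obtain ⟨d, hd⟩ := estep_dstep hes
          exact hZstep ih (Or.inl heO) hd
        · have heGC : e ∈ G \ Cst := (Finset.mem_union.1 he).resolve_left heO
          by_contra hz
          refine (Finset.mem_sdiff.1 heGC).2 ?_
          refine Finset.mem_filter.2 ⟨Finset.mem_sdiff.2 ⟨(Finset.mem_sdiff.1 heGC).1, heO⟩, ?_⟩
          rcases hes with hh | hh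
          · exact Or.inl (by rw [hh]; exact ⟨ih, hz⟩)
          · exact Or.inr (by rw [hh]; exact ⟨ih, hz⟩)
    have hklarge : k ≤ Cst.card := by
      by_contra hlt
      exact hncut (hcut Cst hCsub (not_le.1 hlt))
    set Zc : V → Prop := fun v => ¬ Z v with hZc
    have hterm : ∀ e : Fin n,
        f e * ((@ite ℤ (Zc (ends e).2) (propDecidable _) 1 0)
          - (@ite ℤ (Zc (ends e).1) (propDecidable _) 1 0))
          = (if e ∈ Cst then 1 else 0) := by
      intro e
      by_cases heO : e ∈ O
      · have hnC : e ∉ Cst := fun h =>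
          (Finset.mem_sdiff.1 (Finset.mem_filter.1 h).1).2 heO
        have hiff := hOZ e heO
        by_cases h1 : Z (ends e).1
        · have h2 : Z (ends e).2 := hiff.1 h1
          simp [hZc, h1, h2, hnC]
        · have h2 : ¬ Z (ends e).2 := fun h => h1 (hiff.2 h)
          simp [hZc, h1, h2, hnC]
      · by_cases heG : e ∈ G
        · have hCiff : e ∈ Cst ↔
              ((Z (ends e).1 ∧ ¬ Z (ends e).2) ∨ (Z (ends e).2 ∧ ¬ Z (ends e).1)) := by
            rw [hCdef]
            simp [Finset.mem_filter, Finset.mem_sdiff, heG, heO]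
          by_cases h1 : Z (ends e).1 <;> by_cases h2 : Z (ends e).2
          · simp [hZc, h1, h2, hCiff]
          · have hfe : f e = 1 := by
              rcases lt_or_ge (f e) 1 with hlt | hge
              · exact absurd (hZstep h1 (Or.inr ⟨heG, by simpa using hlt⟩) (hd1 e)) h2
              · have := (hcap e heO heG).2; omega
            simp [hZc, h1, h2, hCiff, hfe]
          · have hfe : f e = -1 := by
              rcases lt_or_ge (-1 : ℤ) (f e) with hlt | hge
              · exact absurd (hZstep h2 (Or.inr ⟨heG, by simpa using hlt⟩) (hd2 e)) h1
              · have := (hcap e heO heG).1; omega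
            simp [hZc, h1, h2, hCiff, hfe]
          · simp [hZc, h1, h2, hCiff]
        · have hnC : e ∉ Cst := fun h => heG (hCsub h)
          simp [hZc, hsupp e heO heG, hnC]
    have hsum1 : psum ends f Zc = Cst.card := by
      unfold psum
      refine (Finset.sum_congr rfl (fun e _ => hterm e)).trans ?_
      rw [← Finset.sum_filter]
      simp
    have hsum2 : psum ends f Zc = psum ends f (· ∈ B) := by
      rw [hZc]; exact psum_compl f hcons Z hZA hZB
    have hcard : (Cst.card : ℤ) = (m : ℤ) := by rw [← hsum1, hsum2, hm]
    omega

lemma exists_flow (hAB : ∀ v ∈ A, v ∉ B) (k : ℕ)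
    (hcut : ∀ C : Finset (Fin n), C ⊆ G → C.card < k → conn ends A B (O ∪ (G \ C))) :
    ∃ f, IsFlow ends A B O G f ∧ psum ends f (· ∈ B) = k := by
  suffices h : ∀ m, m ≤ k → ∃ f, IsFlow ends A B O G f ∧ psum ends f (· ∈ B) = m from
    h k le_rfl
  intro m
  induction m with
  | zero =>
    intro _
    refine ⟨fun _ => 0, ⟨fun e _ _ => by norm_num, fun e _ _ => rfl,
      fun v _ _ => by simp [exc]⟩, by simp [psum]⟩
  | succ m ih =>
    intro hmk
    obtain ⟨f, hf, hm⟩ := ih (Nat.le_of_succ_le hmk)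
    obtain ⟨f', hf', hm'⟩ := augment hAB k hcut f hf m hm (Nat.lt_of_succ_le hmk)
    refine ⟨f', hf', by rw [hm']; push_cast; ring⟩

lemma decomp (hAB : ∀ v ∈ A, v ∉ B) (k : ℕ) :
    ∀ f : Fin n → ℤ, IsFlow ends A B O G f → psum ends f (· ∈ B) = k →
    ∃ S : Fin k → Finset (Fin n),
      (∀ j, S j ⊆ G ∧ ∀ e ∈ S j, e ∉ O ∧ f e ≠ 0) ∧
      (∀ j, conn ends A B (O ∪ S j)) ∧
      (∀ i j, i ≠ j → Disjoint (S i) (S j)) := by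
  induction k with
  | zero =>
    intro f _ _
    exact ⟨Fin.elim0, fun j => j.elim0, fun j => j.elim0, fun i => i.elim0⟩
  | succ k ih =>
    intro f hf hb
    obtain ⟨hcap, hsupp, hcons⟩ := hf
    have hd1 : ∀ e : Fin n, dstep ends e true (ends e).1 (ends e).2 := fun e => by
      simp [dstep]
    have hd2 : ∀ e : Fin n, dstep ends e false (ends e).2 (ends e).1 := fun e => by
      simp [dstep]
    have hreach : ∃ a ∈ A, ∃ b ∈ B, ∃ l, Walk ends (AllowedD O G f) l a b := by
      by_contra hre
      set Z : V → Prop := fun v => ∃ a ∈ A, ∃ l, Walk ends (AllowedD O G f) l a v with hZ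
      have hZA : ∀ a ∈ A, Z a := fun a ha => ⟨a, ha, [], Walk.nil a⟩
      have hZstep : ∀ {u e d y}, Z u → AllowedD O G f e d → dstep ends e d u y → Z y := by
        rintro u e d y ⟨a, ha, l, hl⟩ hal hd
        exact ⟨a, ha, l ++ [(e, d)], walk_snoc hl hal hd⟩
      have hZB : ∀ b ∈ B, ¬ Z b := fun b hb hzb => by
        obtain ⟨a, ha, l, hl⟩ := hzb
        exact hre ⟨a, ha, b, hb, l, hl⟩
      have hOZ : ∀ e ∈ O, (Z (ends e).1 ↔ Z (ends e).2) := fun e he =>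
        ⟨fun h => hZstep h (Or.inl he) (hd1 e), fun h => hZstep h (Or.inl he) (hd2 e)⟩
      set Zc : V → Prop := fun v => ¬ Z v with hZc
      have hterm : ∀ e : Fin n,
          f e * ((@ite ℤ (Zc (ends e).2) (propDecidable _) 1 0)
            - (@ite ℤ (Zc (ends e).1) (propDecidable _) 1 0))
            ≤ 0 := by
        intro e
        have hpos : ∀ w : V, Z w → ¬ Zc w := fun w hw => not_not_intro hw
        have hneg : ∀ w : V, ¬ Z w → Zc w := fun w hw => hw
        by_cases heO : e ∈ O
        · have hiff := hOZ e heO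
          by_cases h1 : Z (ends e).1
          · rw [if_neg (hpos _ (hiff.1 h1)), if_neg (hpos _ h1)]
            simp
          · rw [if_pos (hneg _ (fun h => h1 (hiff.2 h))), if_pos (hneg _ h1)]
            simp
        · by_cases heG : e ∈ G
          · by_cases h1 : Z (ends e).1 <;> by_cases h2 : Z (ends e).2
            · rw [if_neg (hpos _ h2), if_neg (hpos _ h1)]
              simp
            · have hfe : f e ≤ 0 := by
                rcases le_or_gt (f e) 0 with h | h
                · exact h
                · exact absurd (hZstep h1 (Or.inr ⟨heG, by simpa using h⟩) (hd1 e)) h2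
              rw [if_pos (hneg _ h2), if_neg (hpos _ h1)]
              linarith
            · have hge : 0 ≤ f e := by
                rcases le_or_gt 0 (f e) with h | h
                · exact h
                · exact absurd (hZstep h2 (Or.inr ⟨heG, by simpa using h⟩) (hd2 e)) h1
              rw [if_neg (hpos _ h2), if_pos (hneg _ h1)]
              linarith
            · rw [if_pos (hneg _ h2), if_pos (hneg _ h1)]
              simp
          · rw [hsupp e heO heG]
            simp
      have hle : psum ends f Zc ≤ 0 := by
        unfold psum
        exact Finset.sum_nonpos fun e _ => hterm e
      have heq : psum ends f Zc = psum ends f (· ∈ B) := by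
        rw [hZc]; exact psum_compl f hcons Z hZA hZB
      rw [heq, hb] at hle
      omega
    obtain ⟨a, ha, b, hb', l₀, hw₀⟩ := hreach
    obtain ⟨l, hw, hnd, -⟩ := walk_dedup hw₀
    have hallow := walk_allowed hw
    set f' : Fin n → ℤ := fun e => f e - deltaL l e with hf'def
    have hdelta0 : ∀ e, e ∉ O → e ∈ l.map Prod.fst → f' e = 0 := by
      intro e heO hel
      obtain ⟨⟨e₁, d⟩, hmem, hfst⟩ := List.mem_map.1 hel
      have he₁ : e₁ = e := hfst
      subst he₁
      rcases hallow _ hmem with h | h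
      · exact absurd h heO
      · have heG : e₁ ∈ G := h.1
        have hc := hcap e₁ heO heG
        rcases Bool.eq_false_or_eq_true d with hd | hd <;> subst hd
        · -- d = true
          have hpos : 0 < f e₁ := by simpa using h.2
          have hff : (e₁, false) ∉ l := fun hmem' => by
            have := List.inj_on_of_nodup_map hnd hmem hmem' rfl
            simp at this
          have hδ : deltaL l e₁ = 1 := by simp [deltaL, hmem, hff]
          simp only [hf'def, hδ]
          omega
        · -- d = false
          have hneg : f e₁ < 0 := by simpa using h.2
          have hft : (e₁, true) ∉ l := fun hmem' => by
            have := List.inj_on_of_nodup_map hnd hmem hmem' rfl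
            simp at this
          have hδ : deltaL l e₁ = -1 := by simp [deltaL, hmem, hft]
          simp only [hf'def, hδ]
          omega
    have hdeltaeq : ∀ e, e ∉ l.map Prod.fst → f' e = f e := by
      intro e hel
      have h1 : (e, true) ∉ l := fun h => hel (List.mem_map.2 ⟨_, h, rfl⟩)
      have h2 : (e, false) ∉ l := fun h => hel (List.mem_map.2 ⟨_, h, rfl⟩)
      simp [hf'def, deltaL, h1, h2]
    set S₀ : Finset (Fin n) := (l.map Prod.fst).toFinset \ O with hS₀def
    have hS₀G : S₀ ⊆ G := by
      intro e he
      obtain ⟨hmem, heO⟩ := Finset.mem_sdiff.1 he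
      obtain ⟨⟨e₁, d⟩, hmem', hfst⟩ := List.mem_map.1 (List.mem_toFinset.1 hmem)
      have he₁ : e₁ = e := hfst
      subst he₁
      rcases hallow _ hmem' with h | h
      · exact absurd h heO
      · exact h.1
    have hS₀f : ∀ e ∈ S₀, e ∉ O ∧ f e ≠ 0 := by
      intro e he
      obtain ⟨hmem, heO⟩ := Finset.mem_sdiff.1 he
      obtain ⟨⟨e₁, d⟩, hmem', hfst⟩ := List.mem_map.1 (List.mem_toFinset.1 hmem)
      have he₁ : e₁ = e := hfst
      subst he₁
      refine ⟨heO, ?_⟩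
      rcases hallow _ hmem' with h | h
      · exact absurd h heO
      · rcases Bool.eq_false_or_eq_true d with hd | hd <;> subst hd
        · have := h.2; simp at this; omega
        · have := h.2; simp at this; omega
    have hflow' : IsFlow ends A B O G f' := by
      refine ⟨?_, ?_, ?_⟩
      · intro e heO heG
        by_cases hel : e ∈ l.map Prod.fst
        · rw [hdelta0 e heO hel]; omega
        · rw [hdeltaeq e hel]; exact hcap e heO heG
      · intro e heO heG
        have hel : e ∉ l.map Prod.fst := by
          intro hel
          obtain ⟨⟨e₁, d⟩, hmem', hfst⟩ := List.mem_map.1 hel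
          have he₁ : e₁ = e := hfst
          subst he₁
          rcases hallow _ hmem' with h | h
          · exact heO h
          · exact heG h.1
        rw [hdeltaeq e hel]; exact hsupp e heO heG
      · intro w hwA hwB
        have : exc ends f' w = exc ends f w - exc ends (deltaL l) w := exc_sub ends f (deltaL l) w
        rw [this, hcons w hwA hwB, walk_deltaL_exc hw hnd w]
        have hba : ¬ (a = w) := fun h => hwA (h ▸ ha)
        have hbb : ¬ (b = w) := fun h => hwB (h ▸ hb')
        simp [hba, hbb]
    have hbval : psum ends f' (· ∈ B) = k := by
      have : psum ends f' (· ∈ B) = psum ends f (· ∈ B) - psum ends (deltaL l) (· ∈ B) :=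
        psum_sub ends f (deltaL l) (· ∈ B)
      rw [this, hb, walk_deltaL_psum hw hnd (· ∈ B)]
      rw [if_pos hb', if_neg (hAB a ha)]
      push_cast
      ring
    have hconn₀ : conn ends A B (O ∪ S₀) := by
      refine ⟨a, ha, b, hb', walk_rtg (O ∪ S₀) hw ?_⟩
      intro s hs
      by_cases hsO : s.1 ∈ O
      · exact Finset.mem_union_left _ hsO
      · refine Finset.mem_union_right _ ?_
        rw [hS₀def]
        exact Finset.mem_sdiff.2 ⟨List.mem_toFinset.2 (List.mem_map_of_mem (f := Prod.fst) hs), hsO⟩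
    obtain ⟨S', hS'a, hS'b, hS'c⟩ := ih f' hflow' hbval
    have hS'f : ∀ i, ∀ e ∈ S' i, e ∉ O ∧ f e ≠ 0 := by
      intro i e he
      obtain ⟨heO, hf'ne⟩ := (hS'a i).2 e he
      refine ⟨heO, ?_⟩
      by_cases hel : e ∈ l.map Prod.fst
      · exact absurd (hdelta0 e heO hel) hf'ne
      · rw [← hdeltaeq e hel]; exact hf'ne
    have hdisj0 : ∀ i, Disjoint S₀ (S' i) := by
      intro i
      rw [Finset.disjoint_left]
      intro e he₀ heS'
      have h1 := Finset.mem_sdiff.1 he₀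
      exact ((hS'a i).2 e heS').2 (hdelta0 e h1.2 (List.mem_toFinset.1 h1.1))
    refine ⟨Fin.cases S₀ S', ?_, ?_, ?_⟩
    · intro j
      rcases Fin.eq_zero_or_eq_succ j with rfl | ⟨j', rfl⟩
      · simpa using ⟨hS₀G, hS₀f⟩
      · simpa using ⟨(hS'a j').1, hS'f j'⟩
    · intro j
      rcases Fin.eq_zero_or_eq_succ j with rfl | ⟨j', rfl⟩
      · simpa using hconn₀
      · simpa using hS'b j'
    · intro i j hij
      rcases Fin.eq_zero_or_eq_succ i with rfl | ⟨i', rfl⟩ <;>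
        rcases Fin.eq_zero_or_eq_succ j with rfl | ⟨j', rfl⟩
      · exact absurd rfl hij
      · simpa using hdisj0 j'
      · simpa using (hdisj0 i').symm
      · simpa using hS'c i' j' (fun h => hij (by rw [h]))

lemma menger (k : ℕ)
    (hcut : ∀ C : Finset (Fin n), C ⊆ G → C.card < k → conn ends A B (O ∪ (G \ C))) :
    ∃ S : Fin k → Finset (Fin n), (∀ j, S j ⊆ G) ∧ (∀ j, conn ends A B (O ∪ S j)) ∧
      ∀ i j, i ≠ j → Disjoint (S i) (S j) := by
  by_cases h0 : conn ends A B O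
  · exact ⟨fun _ => ∅, fun _ => Finset.empty_subset _,
      fun _ => by simpa using h0, fun _ _ _ => Finset.disjoint_empty_left _⟩
  · have hAB : ∀ v ∈ A, v ∉ B := fun v ha hb =>
      h0 ⟨v, ha, v, hb, Relation.ReflTransGen.refl⟩
    obtain ⟨f, hf, hfk⟩ := exists_flow hAB k hcut
    obtain ⟨S, h1, h2, h3⟩ := decomp hAB k f hf hfk
    exact ⟨S, fun j => (h1 j).1, h2, h3⟩

end main


section generic

lemma flipOn_empty {ι : Type*} [DecidableEq ι] (x : ι → Bool) : flipOn x ∅ = x := by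
  funext i; simp [flipOn]

lemma bs_le_wit {N : ℕ} (f : (Fin N → Bool) → Bool) (x : Fin N → Bool) :
    bsAt f x ≤ witAt f x := by
  have hne : {k | ∃ W : Finset (Fin N), W.card = k ∧ IsWitness f x W}.Nonempty :=
    ⟨(Finset.univ : Finset (Fin N)).card, Finset.univ, rfl, fun y hy => by
      rw [show y = x from funext fun i => hy i (Finset.mem_univ i)]⟩
  have hwit : witAt f x ∈ {k | ∃ W : Finset (Fin N), W.card = k ∧ IsWitness f x W} :=
    Nat.sInf_mem hne
  obtain ⟨W, hWcard, hWwit⟩ := hwit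
  unfold bsAt
  refine csSup_le ⟨0, Fin.elim0, fun j => j.elim0, fun j => j.elim0⟩ ?_
  rintro m ⟨Bl, hB, hdis⟩
  have hmeet : ∀ j : Fin m, ((Bl j) ∩ W).Nonempty := by
    intro j
    rw [Finset.nonempty_iff_ne_empty]
    intro hempty
    refine hB j (hWwit _ ?_)
    intro i hi
    have hiB : i ∉ Bl j := by
      intro hiB
      have hmem : i ∈ Bl j ∩ W := Finset.mem_inter.2 ⟨hiB, hi⟩
      rw [hempty] at hmem
      simp at hmem
    simp [flipOn, hiB]
  have hcard : m ≤ W.card := by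
    have hinj : Set.InjOn (fun j => (hmeet j).choose) ↑(Finset.univ : Finset (Fin m)) := by
      intro j₁ _ j₂ _ heq
      have heq' : (hmeet j₁).choose = (hmeet j₂).choose := heq
      by_contra hnej
      have h1 := Finset.mem_inter.1 (hmeet j₁).choose_spec
      have h2 := Finset.mem_inter.1 (hmeet j₂).choose_spec
      exact Finset.disjoint_left.1 (hdis j₁ j₂ hnej) h1.1 (heq' ▸ h2.1)
    have := Finset.card_le_card_of_injOn (fun j => (hmeet j).choose)
      (fun j _ => (Finset.mem_inter.1 (hmeet j).choose_spec).2) hinj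
    simpa using this
  omega

lemma bs_bdd {N : ℕ} (f : (Fin N → Bool) → Bool) (x : Fin N → Bool) :
    BddAbove {m | ∃ B : Fin m → Finset (Fin N),
      (∀ j, f (flipOn x (B j)) ≠ f x) ∧ ∀ j k, j ≠ k → Disjoint (B j) (B k)} := by
  refine ⟨N, ?_⟩
  rintro m ⟨Bl, hB, hdis⟩
  have hne : ∀ j, (Bl j).Nonempty := by
    intro j
    rw [Finset.nonempty_iff_ne_empty]
    intro h
    exact hB j (by rw [h, flipOn_empty])
  have hinjf : Function.Injective fun j => (hne j).choose := by
    intro j₁ j₂ heq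
    have heq' : (hne j₁).choose = (hne j₂).choose := heq
    by_contra hnej
    exact Finset.disjoint_left.1 (hdis j₁ j₂ hnej) (hne j₁).choose_spec
      (heq' ▸ (hne j₂).choose_spec)
  simpa using Fintype.card_le_of_injective _ hinjf

end generic

end PercAux

/-- for a percolation function `f` (indicator of `{A ↔ B}` in a finite
multigraph with edge set `Fin n` and endpoint map `ends`), the pointwise witness
complexity equals the pointwise block sensitivity, and hence the distributional ones
agree for every `p ∈ [0,1]`. -/
theorem percolation_wit_eq_bs {V : Type*} (n : ℕ) (ends : Fin n → V × V)
    (A B : Set V) (f : (Fin n → Bool) → Bool)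
    (hf : ∀ ω : Fin n → Bool, f ω = true ↔
      ∃ a ∈ A, ∃ b ∈ B, Relation.ReflTransGen
        (fun u v => ∃ e : Fin n, ω e = true ∧ (ends e = (u, v) ∨ ends e = (v, u)))
        a b) :
    (∀ ω : Fin n → Bool, witAt f ω = bsAt f ω) ∧
      ∀ p : ℝ, 0 ≤ p → p ≤ 1 → distWit f p = distBS f p := by
  have hconn : ∀ ω : Fin n → Bool, f ω = true ↔
      PercAux.conn ends A B (Finset.univ.filter fun e => ω e = true) := by
    intro ω
    rw [hf ω]
    constructor
    · rintro ⟨a, ha, b, hb, hr⟩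
      refine ⟨a, ha, b, hb, Relation.ReflTransGen.mono ?_ _ _ hr⟩
      rintro u v ⟨e, he, hs⟩
      exact ⟨e, Finset.mem_filter.2 ⟨Finset.mem_univ e, he⟩, hs⟩
    · rintro ⟨a, ha, b, hb, hr⟩
      refine ⟨a, ha, b, hb, Relation.ReflTransGen.mono ?_ _ _ hr⟩
      rintro u v ⟨e, he, hs⟩
      exact ⟨e, (Finset.mem_filter.1 he).2, hs⟩
  have hpt : ∀ ω : Fin n → Bool, witAt f ω = bsAt f ω := by
    intro ω
    refine le_antisymm ?_ (PercAux.bs_le_wit f ω)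
    set O : Finset (Fin n) := Finset.univ.filter (fun e => ω e = true) with hO
    rcases Bool.eq_false_or_eq_true (f ω) with hfω | hfω
    · -- f ω = true : level sets
      have hstart : ∃ a ∈ A, ∃ b ∈ B, ∃ l,
          PercAux.Walk ends (fun e _ => e ∈ O) l a b := by
        obtain ⟨a, ha, b, hb, hr⟩ := (hconn ω).1 hfω
        obtain ⟨l, hl⟩ := PercAux.rtg_walk hr
        exact ⟨a, ha, b, hb, l, hl⟩
      set WS : Set ℕ := {m | ∃ a ∈ A, ∃ b ∈ B, ∃ l,
        PercAux.Walk ends (fun e _ => e ∈ O) l a b ∧ l.length = m} with hWS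
      have hWSne : WS.Nonempty := by
        obtain ⟨a, ha, b, hb, l, hl⟩ := hstart
        exact ⟨l.length, a, ha, b, hb, l, hl, rfl⟩
      set L := sInf WS with hL
      obtain ⟨a₁, ha₁, b₁, hb₁, l₁, hw₁, hlen₁⟩ := Nat.sInf_mem hWSne
      have hwitle : witAt f ω ≤ L := by
        have hwit : IsWitness f ω ((l₁.map Prod.fst).toFinset) := by
          intro y hy
          have hyt : f y = true := by
            rw [hconn]
            refine ⟨a₁, ha₁, b₁, hb₁, PercAux.walk_rtg _ hw₁ ?_⟩
            intro s hs
            have hsO : s.1 ∈ O := PercAux.walk_allowed hw₁ s hs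
            have hωs : ω s.1 = true := (Finset.mem_filter.1 hsO).2
            have hys : y s.1 = ω s.1 :=
              hy s.1 (List.mem_toFinset.2 (List.mem_map_of_mem (f := Prod.fst) hs))
            exact Finset.mem_filter.2 ⟨Finset.mem_univ _, by rw [hys, hωs]⟩
          rw [hyt, hfω]
        calc witAt f ω ≤ (l₁.map Prod.fst).toFinset.card := Nat.sInf_le ⟨_, rfl, hwit⟩
          _ ≤ (l₁.map Prod.fst).length := List.toFinset_card_le _
          _ = L := by rw [List.length_map, hlen₁]
      refine le_trans hwitle ?_
      set lvP : V → ℕ → Prop := fun v i => ∃ a ∈ A, ∃ l,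
        PercAux.Walk ends (fun e _ => e ∈ O) l a v ∧ l.length ≤ i with hlvP
      have hmono : ∀ v i i', i ≤ i' → lvP v i → lvP v i' := by
        rintro v i i' hii ⟨a, ha, l, hl, hli⟩
        exact ⟨a, ha, l, hl, le_trans hli hii⟩
      have hadj : ∀ (e : Fin n) (u v : V) (i : ℕ), e ∈ O →
          PercAux.estep ends e u v → lvP u i → lvP v (i + 1) := by
        rintro e u v i heO hes ⟨a, ha, l, hl, hli⟩
        obtain ⟨d, hd⟩ := PercAux.estep_dstep hes
        exact ⟨a, ha, l ++ [(e, d)], PercAux.walk_snoc hl heO hd, by simp; omega⟩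
      set Cs : ℕ → Finset (Fin n) := fun i => Finset.univ.filter (fun e =>
        e ∈ O ∧ ((lvP (ends e).1 i ∧ ¬ lvP (ends e).2 i) ∨
          (lvP (ends e).2 i ∧ ¬ lvP (ends e).1 i))) with hCs
      have hcross : ∀ (e : Fin n) (i j : ℕ), i < j → e ∈ Cs i → e ∈ Cs j → False := by
        intro e i j hij hi hj
        obtain ⟨heO, hcond⟩ := (Finset.mem_filter.1 hi).2
        have hboth : lvP (ends e).1 j ∧ lvP (ends e).2 j := by
          rcases hcond with ⟨h1, h2⟩ | ⟨h1, h2⟩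
          · have hstep := hadj e (ends e).1 (ends e).2 i heO (Or.inl (Prod.mk.eta).symm) h1
            exact ⟨hmono _ _ _ (le_of_lt hij) h1, hmono _ _ _ hij hstep⟩
          · have hstep := hadj e (ends e).2 (ends e).1 i heO (Or.inr (Prod.mk.eta).symm) h1
            exact ⟨hmono _ _ _ hij hstep, hmono _ _ _ (le_of_lt hij) h1⟩
        obtain ⟨-, hcondj⟩ := (Finset.mem_filter.1 hj).2
        rcases hcondj with ⟨-, h2⟩ | ⟨-, h2⟩
        · exact h2 hboth.2
        · exact h2 hboth.1
      have hsens : ∀ i : ℕ, i < L → f (flipOn ω (Cs i)) = false := by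
        intro i hiL
        rcases Bool.eq_false_or_eq_true (f (flipOn ω (Cs i))) with h | h
        swap
        · exact h
        exfalso
        obtain ⟨a, ha, b, hb, hr⟩ := (hconn _).1 h
        have hsubset : (Finset.univ.filter fun e => flipOn ω (Cs i) e = true)
            = O \ Cs i := by
          ext e
          simp only [Finset.mem_filter, Finset.mem_univ, true_and, Finset.mem_sdiff]
          by_cases heC : e ∈ Cs i
          · have heO : e ∈ O := ((Finset.mem_filter.1 heC).2).1
            have hωe : ω e = true := (Finset.mem_filter.1 heO).2
            simp [flipOn, heC, hωe]
          · by_cases heO : e ∈ O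
            · have hωe : ω e = true := (Finset.mem_filter.1 heO).2
              simp [flipOn, heC, heO, hωe]
            · have hωe : ω e = false := by
                rcases Bool.eq_false_or_eq_true (ω e) with h' | h'
                · exact absurd (Finset.mem_filter.2 ⟨Finset.mem_univ e, h'⟩) heO
                · exact h'
              simp [flipOn, heC, heO, hωe]
        rw [hsubset] at hr
        have hinv : ∀ v, Relation.ReflTransGen (PercAux.stp ends (O \ Cs i)) a v →
            lvP v i := by
          intro v hrv
          induction hrv with
          | refl =>
            exact hmono a 0 i (Nat.zero_le i) ⟨a, ha, [], PercAux.Walk.nil a, by simp⟩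
          | tail _ hstep ih =>
            obtain ⟨e, he, hes⟩ := hstep
            obtain ⟨heO, heC⟩ := Finset.mem_sdiff.1 he
            by_contra hnv
            apply heC
            refine Finset.mem_filter.2 ⟨Finset.mem_univ e, heO, ?_⟩
            rcases hes with hh | hh
            · exact Or.inl (by rw [hh]; exact ⟨ih, hnv⟩)
            · exact Or.inr (by rw [hh]; exact ⟨ih, hnv⟩)
        obtain ⟨a', ha', l', hl', hlen'⟩ := hinv b hr
        have hLle : L ≤ l'.length := Nat.sInf_le ⟨a', ha', b, hb, l', hl', rfl⟩
        omega
      unfold bsAt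
      apply le_csSup (PercAux.bs_bdd f ω)
      refine ⟨fun j : Fin L => Cs j, ?_, ?_⟩
      · intro j
        rw [hsens j j.isLt, hfω]
        simp
      · intro j k' hjk
        rw [Finset.disjoint_left]
        intro e hej hek
        rcases lt_trichotomy (j : ℕ) (k' : ℕ) with h | h | h
        · exact hcross e _ _ h hej hek
        · exact hjk (Fin.ext h)
        · exact hcross e _ _ h hek hej
    · -- f ω = false : Menger
      set G : Finset (Fin n) := Finset.univ.filter (fun e => ω e = false) with hGdef
      set k := witAt f ω with hk
      have hcut : ∀ C : Finset (Fin n), C ⊆ G → C.card < k →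
          PercAux.conn ends A B (O ∪ (G \ C)) := by
        intro C hCG hCk
        by_contra hnc
        have hwitC : IsWitness f ω C := by
          intro y hy
          have hyf : f y = false := by
            rcases Bool.eq_false_or_eq_true (f y) with h | h
            swap
            · exact h
            exfalso
            apply hnc
            refine PercAux.conn_mono ?_ ((hconn y).1 h)
            intro e he
            have hye : y e = true := (Finset.mem_filter.1 he).2
            by_cases heC : e ∈ C
            · have hωe : ω e = false := (Finset.mem_filter.1 (hCG heC)).2
              rw [hy e heC, hωe] at hye
              exact absurd hye (by simp)
            · by_cases hωe : ω e = true
              · exact Finset.mem_union_left _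
                  (Finset.mem_filter.2 ⟨Finset.mem_univ e, hωe⟩)
              · have hωe' : ω e = false := by
                  rcases Bool.eq_false_or_eq_true (ω e) with h' | h'
                  · exact absurd h' hωe
                  · exact h'
                exact Finset.mem_union_right _ (Finset.mem_sdiff.2
                  ⟨Finset.mem_filter.2 ⟨Finset.mem_univ e, hωe'⟩, heC⟩)
          rw [hyf, hfω]
        have hle : witAt f ω ≤ C.card := Nat.sInf_le ⟨C, rfl, hwitC⟩
        omega
      obtain ⟨S, hSG, hSconn, hSdisj⟩ := PercAux.menger k hcut
      have hflip : ∀ j, f (flipOn ω (S j)) = true := by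
        intro j
        rw [hconn]
        have hEeq : (Finset.univ.filter fun e => flipOn ω (S j) e = true) = O ∪ S j := by
          ext e
          simp only [Finset.mem_filter, Finset.mem_univ, true_and, Finset.mem_union]
          by_cases heS : e ∈ S j
          · have hωe : ω e = false := (Finset.mem_filter.1 (hSG j heS)).2
            have hnO : e ∉ O := fun hmem =>
              absurd (Finset.mem_filter.1 hmem).2 (by simp [hωe])
            simp [flipOn, heS, hωe, hnO]
          · by_cases hωe : ω e = true
            · have hinO : e ∈ O := Finset.mem_filter.2 ⟨Finset.mem_univ e, hωe⟩
              simp [flipOn, heS, hωe, hinO]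
            · have hωe' : ω e = false := by
                rcases Bool.eq_false_or_eq_true (ω e) with h' | h'
                · exact absurd h' hωe
                · exact h'
              have hnO : e ∉ O := fun hmem =>
                absurd (Finset.mem_filter.1 hmem).2 (by simp [hωe'])
              simp [flipOn, heS, hωe', hnO]
        rw [hEeq]
        exact hSconn j
      unfold bsAt
      apply le_csSup (PercAux.bs_bdd f ω)
      exact ⟨S, fun j => by rw [hflip j, hfω]; simp, hSdisj⟩
  refine ⟨hpt, fun p _ _ => ?_⟩
  simp only [distWit, distBS, expec]
  exact Finset.sum_congr rfl fun x _ => by rw [hpt x]
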